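/- A C₄-free graph with minimum degree d has at least d² − d + 1 vertices. -/

import Mathlib

open Finset

/-- A graph is `C₄`-free if it contains no cycle of length 4. -/
def C4Free {V : Type*} (G : SimpleGraph V) : Prop :=
  ∀ (v : V) (w : G.Walk v v), w.IsCycle → w.length ≠ 4

lemma no_common_neighbor {V : Type*} {G : SimpleGraph V} (hC4 : C4Free G)
    {v u u' w : V} (huu' : u ≠ u') (hvw : v ≠ w)
    (h1 : G.Adj v u) (h2 : G.Adj u w) (h3 : G.Adj w u') (h4 : G.Adj u' v) : False := by
  have hvu := G.ne_of_adj h1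
  have huw := G.ne_of_adj h2
  have hwu' := G.ne_of_adj h3
  have hu'v := G.ne_of_adj h4
  set W : G.Walk v v := SimpleGraph.Walk.cons h1 (SimpleGraph.Walk.cons h2
      (SimpleGraph.Walk.cons h3 (SimpleGraph.Walk.cons h4 SimpleGraph.Walk.nil))) with hW
  have hcyc : W.IsCycle := by
    rw [SimpleGraph.Walk.isCycle_def]
    refine ⟨⟨?_⟩, by simp [hW], ?_⟩
    · simp only [hW, SimpleGraph.Walk.edges_cons, SimpleGraph.Walk.edges_nil,
        List.nodup_cons, List.mem_cons, List.not_mem_nil, List.nodup_nil]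
      constructor
      · rintro (h | h | h | h) <;>
          first
            | (rw [Sym2.eq_iff] at h; tauto)
            | exact h.elim
      constructor
      · rintro (h | h | h) <;>
          first
            | (rw [Sym2.eq_iff] at h; tauto)
            | exact h.elim
      constructor
      · rintro (h | h) <;>
          first
            | (rw [Sym2.eq_iff] at h; tauto)
            | exact h.elim
      simp
    · simp only [hW, SimpleGraph.Walk.support_cons, SimpleGraph.Walk.support_nil,
        List.tail_cons, List.nodup_cons, List.mem_cons, List.not_mem_nil]
      refine ⟨by tauto, by tauto, by tauto, by simp⟩
  exact hC4 v W hcyc (by simp [hW])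

/-- A `C₄`-free graph with minimum degree at least `d ≥ 1` has at least `d² − d + 1`
vertices. -/
theorem c4_free_min_degree_vertices {V : Type*} [Fintype V] [Nonempty V]
    (G : SimpleGraph V) [DecidableRel G.Adj] (d : ℕ) (hd : 1 ≤ d)
    (hC4 : C4Free G) (hdeg : ∀ v, d ≤ G.degree v) :
    d ^ 2 - d + 1 ≤ Fintype.card V := by
  classical
  obtain ⟨v⟩ := ‹Nonempty V›
  set N := G.neighborFinset v with hNdef
  have hN : d ≤ N.card := by simpa [hNdef, SimpleGraph.card_neighborFinset_eq_degree] using hdeg v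
  set S : V → Finset V := fun u => (G.neighborFinset u).erase v with hSdef
  have hS : ∀ u ∈ N, d - 1 ≤ (S u).card := by
    intro u hu
    have hdu : d ≤ (G.neighborFinset u).card := by
      simpa [SimpleGraph.card_neighborFinset_eq_degree] using hdeg u
    have hv : v ∈ G.neighborFinset u := by
      rw [SimpleGraph.mem_neighborFinset]
      simp only [hNdef, SimpleGraph.mem_neighborFinset] at hu
      exact hu.symm
    rw [hSdef]
    simp only
    rw [Finset.card_erase_of_mem hv]
    omega
  have hdisj : ∀ u ∈ N, ∀ u' ∈ N, u ≠ u' → Disjoint (S u) (S u') := by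
    intro u hu u' hu' hne
    rw [Finset.disjoint_left]
    intro w hw hw'
    simp only [hSdef, Finset.mem_erase, SimpleGraph.mem_neighborFinset] at hw hw'
    rw [hNdef, SimpleGraph.mem_neighborFinset] at hu hu'
    exact no_common_neighbor hC4 hne (Ne.symm hw.1) hu hw.2 hw'.2.symm hu'.symm
  have hcard : d * (d - 1) ≤ (N.biUnion S).card := by
    rw [Finset.card_biUnion hdisj]
    calc d * (d - 1) ≤ N.card * (d - 1) := Nat.mul_le_mul_right _ hN
      _ = N.card • (d - 1) := (smul_eq_mul _ _).symm
      _ ≤ ∑ u ∈ N, (S u).card := Finset.card_nsmul_le_sum _ _ _ hS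
  have hvnot : v ∉ N.biUnion S := by
    simp only [Finset.mem_biUnion]
    rintro ⟨u, -, hv⟩
    exact Finset.notMem_erase v _ hv
  have hins : (insert v (N.biUnion S)).card ≤ Fintype.card V := by
    rw [← Finset.card_univ]
    exact Finset.card_le_univ _
  rw [Finset.card_insert_of_notMem hvnot] at hins
  have hkey : d * (d - 1) = d ^ 2 - d := by
    rw [Nat.mul_sub, Nat.mul_one, pow_two]
  omega
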